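/- Let f(x,y,u) = y(y−1)/(x−y) and h(x,y,u) = (2xy − x − y)/(x−y)^2 be the data of the Gibbons–Tsarev system (33), and let c1, c2, c3, c4 be arbitrary constants. Then the extension ∂_i v = g(p_i, u, v) ∂_i u with g(p,u,v) = c1/(p−1) + c2/p + (c3·e^u − c4·e^{2u})·p + c4·e^{2u}·p^2 (independent of v) is compatible with this system: the expression E(x,y) = g_1(x,u)·f(y,x,u) + g_2(x,u) + g(x,u)·h(x,y,u) satisfies E(x,y) = E(y,x) for all distinct x, y with x, y ∉ {0, 1} and all u. -/

import Mathlib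

/-- The compatibility expression `E(x,y)` for an extension `∂ᵢv = g(pᵢ,u) ∂ᵢu`
(with `g` independent of `v`) of a one-field Gibbons–Tsarev system with data `f`, `h`:
`E(x,y) = g₁(x,u)·f(y,x,u) + g₂(x,u) + g(x,u)·h(x,y,u)`. -/
noncomputable def extE2 (f h : ℝ → ℝ → ℝ → ℝ) (g : ℝ → ℝ → ℝ) (x y u : ℝ) : ℝ :=
  deriv (fun s => g s u) x * f y x u + deriv (fun s => g x s) u + g x u * h x y u

lemma gderiv1 (c1 c2 c3 c4 : ℝ) (x u : ℝ) (hx0 : x ≠ 0) (hx1 : x ≠ 1) :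
    deriv (fun s : ℝ => c1 / (s - 1) + c2 / s
      + (c3 * Real.exp u - c4 * Real.exp (2 * u)) * s + c4 * Real.exp (2 * u) * s ^ 2) x
    = -c1 / (x - 1) ^ 2 - c2 / x ^ 2 + (c3 * Real.exp u - c4 * Real.exp (2 * u))
      + c4 * Real.exp (2 * u) * (2 * x) := by
  have hx1' : x - 1 ≠ 0 := sub_ne_zero.mpr hx1
  have h1 : HasDerivAt (fun s : ℝ => c1 / (s - 1)) (-c1 / (x - 1) ^ 2) x := by
    have := (hasDerivAt_const x c1).div ((hasDerivAt_id x).sub_const 1) hx1'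
    simp at this; exact this
  have h2 : HasDerivAt (fun s : ℝ => c2 / s) (-c2 / x ^ 2) x := by
    have := (hasDerivAt_const x c2).div (hasDerivAt_id x) hx0
    simp at this; exact this
  have h3 : HasDerivAt (fun s : ℝ => (c3 * Real.exp u - c4 * Real.exp (2 * u)) * s)
      (c3 * Real.exp u - c4 * Real.exp (2 * u)) x := by
    simpa using (hasDerivAt_id x).const_mul (c3 * Real.exp u - c4 * Real.exp (2 * u))
  have h4 : HasDerivAt (fun s : ℝ => c4 * Real.exp (2 * u) * s ^ 2)
      (c4 * Real.exp (2 * u) * (2 * x)) x := by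
    simpa using (hasDerivAt_pow 2 x).const_mul (c4 * Real.exp (2 * u))
  have := (((h1.add h2).add h3).add h4).deriv
  refine this.trans ?_; ring

lemma gderiv2 (c1 c2 c3 c4 : ℝ) (x u : ℝ) :
    deriv (fun s : ℝ => c1 / (x - 1) + c2 / x
      + (c3 * Real.exp s - c4 * Real.exp (2 * s)) * x + c4 * Real.exp (2 * s) * x ^ 2) u
    = (c3 * Real.exp u - c4 * (2 * Real.exp (2 * u))) * x
      + c4 * (2 * Real.exp (2 * u)) * x ^ 2 := by
  have he : HasDerivAt (fun s : ℝ => Real.exp (2 * s)) (2 * Real.exp (2 * u)) u := by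
    have := (Real.hasDerivAt_exp (2 * u)).comp u ((hasDerivAt_id u).const_mul 2)
    simpa [Function.comp_def, mul_comm] using this
  have h3 : HasDerivAt (fun s : ℝ => (c3 * Real.exp s - c4 * Real.exp (2 * s)) * x)
      ((c3 * Real.exp u - c4 * (2 * Real.exp (2 * u))) * x) u :=
    (((Real.hasDerivAt_exp u).const_mul c3).sub (he.const_mul c4)).mul_const x
  have h4 : HasDerivAt (fun s : ℝ => c4 * Real.exp (2 * s) * x ^ 2)
      (c4 * (2 * Real.exp (2 * u)) * x ^ 2) u := by
    simpa [mul_assoc] using ((he.const_mul c4).mul_const (x ^ 2))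
  have : HasDerivAt (fun s : ℝ => c1 / (x - 1) + c2 / x
      + (c3 * Real.exp s - c4 * Real.exp (2 * s)) * x + c4 * Real.exp (2 * s) * x ^ 2)
      ((c3 * Real.exp u - c4 * (2 * Real.exp (2 * u))) * x
      + c4 * (2 * Real.exp (2 * u)) * x ^ 2) u := by
    have h5 := (((hasDerivAt_const u (c1 / (x - 1) + c2 / x)).add h3).add h4); rw [zero_add] at h5; exact h5
  simpa [add_assoc] using this.deriv

theorem stmt_6 (c1 c2 c3 c4 : ℝ) (f h : ℝ → ℝ → ℝ → ℝ) (g : ℝ → ℝ → ℝ)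
    (hf : ∀ x y u : ℝ, f x y u = y * (y - 1) / (x - y))
    (hh : ∀ x y u : ℝ, h x y u = (2 * x * y - x - y) / (x - y) ^ 2)
    (hg : ∀ p u : ℝ, g p u = c1 / (p - 1) + c2 / p
      + (c3 * Real.exp u - c4 * Real.exp (2 * u)) * p + c4 * Real.exp (2 * u) * p ^ 2) :
    ∀ (x y u : ℝ), x ≠ y → x ≠ 0 → x ≠ 1 → y ≠ 0 → y ≠ 1 →
      extE2 f h g x y u = extE2 f h g y x u := by
  intro x y u hxy hx0 hx1 hy0 hy1
  have hyx : y ≠ x := hxy.symm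
  have hxy' : x - y ≠ 0 := sub_ne_zero.mpr hxy
  have hyx' : y - x ≠ 0 := sub_ne_zero.mpr hyx
  have hx1' : x - 1 ≠ 0 := sub_ne_zero.mpr hx1
  have hy1' : y - 1 ≠ 0 := sub_ne_zero.mpr hy1
  have hgx : (fun s => g s u) = fun s : ℝ => c1 / (s - 1) + c2 / s
      + (c3 * Real.exp u - c4 * Real.exp (2 * u)) * s + c4 * Real.exp (2 * u) * s ^ 2 := by
    funext s; exact hg s u
  have hgy : (fun s => g x s) = fun s : ℝ => c1 / (x - 1) + c2 / x
      + (c3 * Real.exp s - c4 * Real.exp (2 * s)) * x + c4 * Real.exp (2 * s) * x ^ 2 := by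
    funext s; exact hg x s
  have hgy' : (fun s => g y s) = fun s : ℝ => c1 / (y - 1) + c2 / y
      + (c3 * Real.exp s - c4 * Real.exp (2 * s)) * y + c4 * Real.exp (2 * s) * y ^ 2 := by
    funext s; exact hg y s
  simp only [extE2, hgx, hgy, hgy', gderiv1 c1 c2 c3 c4 x u hx0 hx1,
    gderiv1 c1 c2 c3 c4 y u hy0 hy1, gderiv2, hf, hh, hg]
  field_simp
  ring
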